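/- Suppose t ∈ {0,1,…,m} is such that for every nonempty u′ ⊆ {1,…,s} and every k′ ∈ ℕ₀^{|u′|} with 0 ≤ k′_j ≤ m for all j and Σ_{j∈u′} k′_j ≤ m − t, the matrix C_{u′,k′} has full row rank over F₂. Then the maximal gain coefficient Γ = max over nonempty u ⊆ {1,…,s} and k ∈ {0,1,…,m−1}^{|u|} of Γ_{u,k} satisfies Γ ≤ 2^{t + s − 1}. -/

import Mathlib

open Finset

noncomputable section

/-- The bit vector `i⃗ ∈ F₂^m` of the integer `i = Σ_{ℓ=1}^m i_ℓ 2^{ℓ-1}`. -/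
def bvec (m : ℕ) (i : ℕ) : Fin m → ZMod 2 :=
  fun ℓ => if Nat.testBit i ℓ.1 then 1 else 0

/-- The `(r+1)`-st row (i.e. `r` with 0-indexing) of an `m × m` matrix over `F₂`,
as a vector in `F₂^m`; junk value `0` if `r ≥ m` (never used under the hypotheses below). -/
def rowAt (m : ℕ) (A : Matrix (Fin m) (Fin m) (ZMod 2)) (r : ℕ) : Fin m → ZMod 2 :=
  fun ℓ => if h : r < m then A ⟨r, h⟩ ℓ else 0

/-- The stacked matrix `C_{u,k}`: for each `j ∈ u`, the first `k j` rows of `C j`. -/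
def stack {m s : ℕ} (C : Fin s → Matrix (Fin m) (Fin m) (ZMod 2))
    (u : Finset (Fin s)) (k : Fin s → ℕ) :
    Matrix ((j : {x // x ∈ u}) × Fin (k j.1)) (Fin m) (ZMod 2) :=
  fun p => rowAt m (C p.1.1) p.2.1

/-- `∇C_{u,k}`: the matrix whose rows are the `(k j + 1)`-st rows (1-indexed) of `C j`, `j ∈ u`. -/
def grad {m s : ℕ} (C : Fin s → Matrix (Fin m) (Fin m) (ZMod 2))
    (u : Finset (Fin s)) (k : Fin s → ℕ) :
    Matrix {x // x ∈ u} (Fin m) (ZMod 2) :=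
  fun j => rowAt m (C j.1) (k j.1)

/-- The coordinate `x_{ij} ∈ [0,1)` of the digital net generated by `C₁,…,C_s`:
`x_{ij} = Σ_{ℓ=1}^m y_ℓ 2^{-ℓ}` where `y = C_j · i⃗` over `F₂`. -/
def pt {m s : ℕ} (C : Fin s → Matrix (Fin m) (Fin m) (ZMod 2)) (i : ℕ) (j : Fin s) : ℝ :=
  ∑ ℓ : Fin m, (((C j).mulVec (bvec m i) ℓ).val : ℝ) / 2 ^ (ℓ.1 + 1)

/-- The factor `N`: with `M(x,x') = max{k ∈ ℕ₀ : ⌊2^k x⌋ = ⌊2^k x'⌋}` (the number of matching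
leading binary digits), `Nf x x' c` equals `1` if `M(x,x') > c` (equivalently the first `c+1`
binary digits match), `-1` if `M(x,x') = c` (the first `c` digits match but not `c+1`), and
`0` if `M(x,x') < c`. -/
def Nf (x x' : ℝ) (c : ℕ) : ℤ :=
  if ⌊(2:ℝ) ^ (c + 1) * x⌋ = ⌊(2:ℝ) ^ (c + 1) * x'⌋ then 1
  else if ⌊(2:ℝ) ^ c * x⌋ = ⌊(2:ℝ) ^ c * x'⌋ then -1
  else 0

/-- The gain coefficient `Γ_{u,k} = 2^{-m} Σ_{i=0}^{2^m-1} Σ_{i'=0}^{2^m-1} ∏_{j∈u} N_{i,i',j}`. -/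
def Gam {m s : ℕ} (C : Fin s → Matrix (Fin m) (Fin m) (ZMod 2))
    (u : Finset (Fin s)) (k : Fin s → ℕ) : ℚ :=
  (2 ^ m : ℚ)⁻¹ * ∑ i ∈ Finset.range (2 ^ m), ∑ i' ∈ Finset.range (2 ^ m),
      ∏ j ∈ u, (Nf (pt C i j) (pt C i' j) (k j) : ℚ)

open Matrix
open scoped Classical

lemma sum_pow_two (n : ℕ) : (∑ j ∈ range n, 2 ^ j) = 2 ^ n - 1 := by
  induction n with
  | zero => simp
  | succ n ih =>
    rw [Finset.sum_range_succ, ih]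
    have := Nat.one_le_two_pow (n := n)
    omega

lemma bin_bound (f : ℕ → ℕ) (hf : ∀ j, f j ≤ 1) (n : ℕ) :
    (∑ j ∈ range n, f j * 2 ^ j) < 2 ^ n := by
  calc (∑ j ∈ range n, f j * 2 ^ j) ≤ ∑ j ∈ range n, 1 * 2 ^ j :=
        Finset.sum_le_sum fun i _ => Nat.mul_le_mul_right _ (hf i)
    _ < 2 ^ n := by
        simp only [one_mul, sum_pow_two]
        have := Nat.one_le_two_pow (n := n); omega

lemma bin_inj (f g : ℕ → ℕ) (hf : ∀ j, f j ≤ 1) (hg : ∀ j, g j ≤ 1) :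
    ∀ n, (∑ j ∈ range n, f j * 2 ^ j) = (∑ j ∈ range n, g j * 2 ^ j) →
      ∀ j < n, f j = g j := by
  intro n
  induction n with
  | zero => intro _ j hj; omega
  | succ n ih =>
    intro h j hj
    have hfb := bin_bound f hf n
    have hgb := bin_bound g hg n
    rw [Finset.sum_range_succ, Finset.sum_range_succ] at h
    have hend : f n = g n := by
      rcases Nat.le_one_iff_eq_zero_or_eq_one.mp (hf n) with h0 | h0 <;>
        rcases Nat.le_one_iff_eq_zero_or_eq_one.mp (hg n) with h1 | h1 <;>
          rw [h0, h1] at h ⊢ <;> simp at h <;> omega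
    rcases Nat.lt_succ_iff_lt_or_eq.mp hj with hj' | hj'
    · exact ih (by rw [hend] at h; omega) j hj'
    · rw [hj']; exact hend

def ptv (m : ℕ) (y : Fin m → ZMod 2) : ℝ := ∑ ℓ : Fin m, ((y ℓ).val : ℝ) / 2 ^ (ℓ.1 + 1)

def yb (m : ℕ) (y : Fin m → ZMod 2) : ℕ → ℕ := fun ℓ => if h : ℓ < m then (y ⟨ℓ, h⟩).val else 0

def Flo (m : ℕ) (y : Fin m → ZMod 2) (c : ℕ) : ℕ := ∑ ℓ ∈ range c, yb m y ℓ * 2 ^ (c - 1 - ℓ)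

lemma yb_le (m : ℕ) (y : Fin m → ZMod 2) (ℓ : ℕ) : yb m y ℓ ≤ 1 := by
  unfold yb
  split
  · have := ZMod.val_lt (n := 2) (y ⟨ℓ, by assumption⟩); omega
  · omega

lemma halves_le (w : ℕ → ℝ) (hw0 : ∀ j, 0 ≤ w j) (hw1 : ∀ j, w j ≤ 1) (n : ℕ) :
    (∑ j ∈ range n, w j / 2 ^ (j + 1)) ≤ 1 - 1 / (2:ℝ) ^ n := by
  induction n with
  | zero => simp
  | succ n ih =>
    rw [Finset.sum_range_succ]
    have hwn : w n / 2 ^ (n + 1) ≤ 1 / (2:ℝ) ^ (n + 1) := by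
      gcongr
      exact hw1 n
    have h3 : (1:ℝ) / 2 ^ (n + 1) + 1 / 2 ^ (n + 1) = 1 / 2 ^ n := by
      rw [pow_succ]; field_simp; ring
    linarith

lemma ptv_eq_range (m : ℕ) (y : Fin m → ZMod 2) :
    ptv m y = ∑ ℓ ∈ range m, (yb m y ℓ : ℝ) / 2 ^ (ℓ + 1) := by
  rw [ptv, ← Fin.sum_univ_eq_sum_range (fun ℓ => (yb m y ℓ : ℝ) / 2 ^ (ℓ + 1)) m]
  refine Finset.sum_congr rfl fun ℓ _ => ?_
  simp [yb, ℓ.2]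

lemma floor_ptv (m : ℕ) (y : Fin m → ZMod 2) (c : ℕ) (hc : c ≤ m) :
    ⌊(2 : ℝ) ^ c * ptv m y⌋ = (Flo m y c : ℤ) := by
  rw [ptv_eq_range, Finset.mul_sum]
  have hsplit : range m = range c ∪ Finset.Ico c m := by
    ext a; simp only [Finset.mem_union, Finset.mem_range, Finset.mem_Ico]; omega
  have hdisj : Disjoint (range c) (Finset.Ico c m) := by
    rw [Finset.disjoint_left]
    intro a ha hb
    simp only [Finset.mem_range] at ha
    simp only [Finset.mem_Ico] at hb
    omega
  rw [hsplit, Finset.sum_union hdisj]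
  have hA : (∑ ℓ ∈ range c, (2:ℝ) ^ c * ((yb m y ℓ : ℝ) / 2 ^ (ℓ + 1)))
      = ((Flo m y c : ℤ) : ℝ) := by
    rw [Flo]
    push_cast
    refine Finset.sum_congr rfl fun ℓ hℓ => ?_
    have hℓc : ℓ < c := Finset.mem_range.mp hℓ
    have h2 : (2:ℝ) ^ c = 2 ^ (c - 1 - ℓ) * 2 ^ (ℓ + 1) := by
      rw [← pow_add]; congr 1; omega
    rw [h2]
    field_simp
  rw [hA]
  have hB0 : 0 ≤ (∑ ℓ ∈ Finset.Ico c m, (2:ℝ) ^ c * ((yb m y ℓ : ℝ) / 2 ^ (ℓ + 1))) :=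
    Finset.sum_nonneg fun ℓ _ => by positivity
  have hB1 : (∑ ℓ ∈ Finset.Ico c m, (2:ℝ) ^ c * ((yb m y ℓ : ℝ) / 2 ^ (ℓ + 1))) < 1 := by
    rw [Finset.sum_Ico_eq_sum_range]
    have heq : ∀ j ∈ range (m - c), (2:ℝ) ^ c * ((yb m y (c + j) : ℝ) / 2 ^ (c + j + 1))
        = (fun j => (yb m y (c + j) : ℝ)) j / 2 ^ (j + 1) := by
      intro j _
      have h2 : (2:ℝ) ^ (c + j + 1) = 2 ^ c * 2 ^ (j + 1) := by ring
      dsimp only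
      rw [h2]
      field_simp
      try ring
    rw [Finset.sum_congr rfl heq]
    have hle := halves_le (fun j => (yb m y (c + j) : ℝ))
      (fun j => by positivity)
      (fun j => by exact_mod_cast yb_le m y (c + j)) (m - c)
    have hpos : (0:ℝ) < 1 / (2:ℝ) ^ (m - c) := by positivity
    linarith
  rw [Int.floor_eq_iff]
  constructor
  · linarith
  · push_cast; linarith

lemma floor_ptv_iff (m : ℕ) (y z : Fin m → ZMod 2) (c : ℕ) (hc : c ≤ m) :
    ⌊(2 : ℝ) ^ c * ptv m y⌋ = ⌊(2 : ℝ) ^ c * ptv m z⌋ ↔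
      ∀ ℓ : Fin m, ℓ.1 < c → y ℓ = z ℓ := by
  rw [floor_ptv m y c hc, floor_ptv m z c hc]
  have hrefl : ∀ w : Fin m → ZMod 2,
      Flo m w c = ∑ j ∈ range c, yb m w (c - 1 - j) * 2 ^ j := by
    intro w
    rw [Flo, ← Finset.sum_range_reflect]
    refine Finset.sum_congr rfl fun j hj => ?_
    have hjc : j < c := Finset.mem_range.mp hj
    congr 2
    omega
  constructor
  · intro h ℓ hℓ
    have h' : Flo m y c = Flo m z c := by exact_mod_cast h
    rw [hrefl, hrefl] at h'
    have hb := bin_inj (fun j => yb m y (c - 1 - j)) (fun j => yb m z (c - 1 - j))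
      (fun j => yb_le m y _) (fun j => yb_le m z _) c h' (c - 1 - ℓ.1) (by omega)
    have e : c - 1 - (c - 1 - ℓ.1) = ℓ.1 := by omega
    rw [e] at hb
    simp only [yb, ℓ.2, dif_pos] at hb
    have := ZMod.val_injective 2 hb
    simpa using this
  · intro h
    have : Flo m y c = Flo m z c := by
      rw [Flo, Flo]
      refine Finset.sum_congr rfl fun ℓ hℓ => ?_
      have hℓc : ℓ < c := Finset.mem_range.mp hℓ
      have hℓm : ℓ < m := lt_of_lt_of_le hℓc hc
      congr 1
      simp only [yb, hℓm, dif_pos]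
      rw [h ⟨ℓ, hℓm⟩ hℓc]
    exact_mod_cast this

lemma zmod2_eq_iff (a b : ZMod 2) : a = b ↔ a + b = 0 := by revert a b; decide

lemma zmod2_val_add_eq (a b : ZMod 2) (h : a = b) : (a + b).val = 0 := by revert a b; decide

lemma zmod2_val_add_ne (a b : ZMod 2) (h : a ≠ b) : (a + b).val = 1 := by revert a b; decide

lemma zmod2_neg_one_pow_add (a b : ZMod 2) :
    ((-1:ℚ)) ^ ((a + b).val) = (-1:ℚ) ^ a.val * (-1:ℚ) ^ b.val := by
  have h : ∀ x : ZMod 2, x.val = 0 ∨ x.val = 1 := by decide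
  have hval : (a + b).val % 2 = (a.val + b.val) % 2 := by revert a b; decide
  rcases h a with ha | ha <;> rcases h b with hb | hb <;>
    rcases h (a + b) with hab | hab <;>
      rw [ha, hb, hab] <;> (try norm_num) <;> omega

lemma N_formula (m : ℕ) (y z : Fin m → ZMod 2) (c : ℕ) (hc : c < m) :
    ((Nf (ptv m y) (ptv m z) c : ℚ)) =
      if (∀ ℓ : Fin m, ℓ.1 < c → y ℓ = z ℓ)
        then (-1:ℚ) ^ ((y ⟨c, hc⟩ + z ⟨c, hc⟩).val) else 0 := by
  rw [Nf]
  by_cases hP0 : ∀ ℓ : Fin m, ℓ.1 < c → y ℓ = z ℓ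
  · by_cases hyc : y ⟨c, hc⟩ = z ⟨c, hc⟩
    · have hP1 : ⌊(2:ℝ) ^ (c+1) * ptv m y⌋ = ⌊(2:ℝ) ^ (c+1) * ptv m z⌋ := by
        rw [floor_ptv_iff m y z (c+1) (by omega)]
        intro ℓ hℓ
        rcases Nat.lt_succ_iff_lt_or_eq.mp hℓ with h | h
        · exact hP0 ℓ h
        · have : ℓ = ⟨c, hc⟩ := Fin.ext h
          rw [this]; exact hyc
      rw [if_pos hP1, if_pos hP0, zmod2_val_add_eq _ _ hyc]
      norm_num
    · have hP1 : ¬ ⌊(2:ℝ) ^ (c+1) * ptv m y⌋ = ⌊(2:ℝ) ^ (c+1) * ptv m z⌋ := by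
        rw [floor_ptv_iff m y z (c+1) (by omega)]
        intro hall
        exact hyc (hall ⟨c, hc⟩ (Nat.lt_succ_self c))
      have hQ0 : ⌊(2:ℝ) ^ c * ptv m y⌋ = ⌊(2:ℝ) ^ c * ptv m z⌋ := by
        rw [floor_ptv_iff m y z c (by omega)]
        exact hP0
      rw [if_neg hP1, if_pos hQ0, if_pos hP0, zmod2_val_add_ne _ _ hyc]
      norm_num
  · have hP1 : ¬ ⌊(2:ℝ) ^ (c+1) * ptv m y⌋ = ⌊(2:ℝ) ^ (c+1) * ptv m z⌋ := by
      rw [floor_ptv_iff m y z (c+1) (by omega)]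
      intro hall
      exact hP0 fun ℓ hℓ => hall ℓ (by omega)
    have hQ0 : ¬ ⌊(2:ℝ) ^ c * ptv m y⌋ = ⌊(2:ℝ) ^ c * ptv m z⌋ := by
      rw [floor_ptv_iff m y z c (by omega)]
      exact hP0
    rw [if_neg hP1, if_neg hQ0, if_neg hP0]
    norm_num

lemma prod_formula {s : ℕ} (u : Finset (Fin s)) (P : Fin s → Prop) [DecidablePred P]
    (a : Fin s → ZMod 2) :
    (∏ j ∈ u, if P j then ((-1:ℚ)) ^ ((a j).val) else 0) =
      if (∀ j ∈ u, P j) then (-1:ℚ) ^ ((∑ j ∈ u, a j).val) else 0 := by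
  classical
  induction u using Finset.induction_on with
  | empty => simp
  | @insert j u' hj ih =>
    rw [Finset.prod_insert hj, Finset.sum_insert hj, ih]
    by_cases hPj : P j
    · by_cases hall : ∀ i ∈ u', P i
      · have hins : ∀ i ∈ insert j u', P i := by
          intro i hi
          rcases Finset.mem_insert.mp hi with h | h
          · rw [h]; exact hPj
          · exact hall i h
        rw [if_pos hPj, if_pos hall, if_pos hins, zmod2_neg_one_pow_add]
      · have hins : ¬ ∀ i ∈ insert j u', P i :=
          fun hcon => hall fun i hi => hcon i (Finset.mem_insert_of_mem hi)
        rw [if_neg hall, if_neg hins, mul_zero]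
    · have hins : ¬ ∀ i ∈ insert j u', P i :=
        fun hcon => hPj (hcon j (Finset.mem_insert_self j u'))
      rw [if_neg hPj, if_neg hins, zero_mul]

def fin2ZMod : Fin 2 ≃ ZMod 2 :=
  ⟨fun x => if x.val = 1 then 1 else 0, fun a => if a = 1 then 1 else 0, by decide, by decide⟩

lemma bvec_ffe (m : ℕ) (g : Fin m → Fin 2) :
    bvec m ((finFunctionFinEquiv g : Fin (2 ^ m)) : ℕ)
      = (Equiv.piCongrRight fun _ : Fin m => fin2ZMod) g := by
  funext ℓ
  have hval : (g ℓ).val = ((finFunctionFinEquiv g : Fin (2 ^ m)) : ℕ) / 2 ^ (ℓ : ℕ) % 2 := by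
    conv_lhs => rw [← Equiv.symm_apply_apply finFunctionFinEquiv g]
    rfl
  show (if Nat.testBit _ ℓ.1 then (1 : ZMod 2) else 0) = fin2ZMod (g ℓ)
  rw [Nat.testBit_eq_decide_div_mod_eq, ← hval]
  show _ = if (g ℓ).val = 1 then (1 : ZMod 2) else 0
  by_cases h : (g ℓ).val = 1 <;> simp [h]

lemma sum_bvec (m : ℕ) (f : (Fin m → ZMod 2) → ℚ) :
    (∑ i ∈ range (2 ^ m), f (bvec m i)) = ∑ e : Fin m → ZMod 2, f e := by
  rw [← Fin.sum_univ_eq_sum_range (fun i => f (bvec m i)) (2 ^ m)]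
  rw [← Equiv.sum_comp finFunctionFinEquiv (fun i : Fin (2 ^ m) => f (bvec m i.1))]
  rw [← Equiv.sum_comp (Equiv.piCongrRight fun _ : Fin m => fin2ZMod) f]
  refine Finset.sum_congr rfl fun g _ => ?_
  rw [bvec_ffe]

lemma mulVec_row (m : ℕ) (A : Matrix (Fin m) (Fin m) (ZMod 2)) (v : Fin m → ZMod 2) (ℓ : Fin m) :
    A.mulVec v ℓ = rowAt m A ℓ.1 ⬝ᵥ v := by
  have h : rowAt m A ℓ.1 = A ℓ := by
    funext ℓ'
    rw [rowAt, dif_pos ℓ.isLt]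
  rw [h]
  rfl

lemma N_term {m s : ℕ} (C : Fin s → Matrix (Fin m) (Fin m) (ZMod 2)) (i i' : ℕ) (j : Fin s)
    (c : ℕ) (hc : c < m) :
    (Nf (pt C i j) (pt C i' j) c : ℚ)
      = if (∀ ℓ : Fin m, ℓ.1 < c → rowAt m (C j) ℓ.1 ⬝ᵥ (bvec m i + bvec m i') = 0)
          then (-1:ℚ) ^ ((rowAt m (C j) c ⬝ᵥ (bvec m i + bvec m i')).val) else 0 := by
  have h0 : pt C i j = ptv m ((C j).mulVec (bvec m i)) := rfl
  have h1 : pt C i' j = ptv m ((C j).mulVec (bvec m i')) := rfl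
  rw [h0, h1, N_formula m _ _ c hc]
  have hadd : ∀ ℓ : Fin m, (C j).mulVec (bvec m i) ℓ + (C j).mulVec (bvec m i') ℓ
      = rowAt m (C j) ℓ.1 ⬝ᵥ (bvec m i + bvec m i') := by
    intro ℓ
    rw [← mulVec_row, Matrix.mulVec_add]
    rfl
  refine if_congr ?_ ?_ rfl
  · constructor
    · intro h ℓ hℓ
      rw [← hadd ℓ, ← zmod2_eq_iff]
      exact h ℓ hℓ
    · intro h ℓ hℓ
      rw [zmod2_eq_iff, hadd ℓ]
      exact h ℓ hℓ
  · rw [hadd ⟨c, hc⟩]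

lemma Gam_eq {m s : ℕ} (hm : 1 ≤ m) (C : Fin s → Matrix (Fin m) (Fin m) (ZMod 2))
    (u : Finset (Fin s)) (k : Fin s → ℕ) (hk : ∀ j ∈ u, k j ≤ m - 1) :
    Gam C u k = ∑ e : Fin m → ZMod 2,
      (if (∀ j ∈ u, ∀ ℓ : Fin m, ℓ.1 < k j → rowAt m (C j) ℓ.1 ⬝ᵥ e = 0)
        then (-1:ℚ) ^ (((∑ j ∈ u, rowAt m (C j) (k j)) ⬝ᵥ e).val) else 0) := by
  set T : (Fin m → ZMod 2) → ℚ := fun e =>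
    if (∀ j ∈ u, ∀ ℓ : Fin m, ℓ.1 < k j → rowAt m (C j) ℓ.1 ⬝ᵥ e = 0)
      then (-1:ℚ) ^ (((∑ j ∈ u, rowAt m (C j) (k j)) ⬝ᵥ e).val) else 0 with hT
  have hterm : ∀ i i' : ℕ,
      (∏ j ∈ u, (Nf (pt C i j) (pt C i' j) (k j) : ℚ)) = T (bvec m i + bvec m i') := by
    intro i i'
    have h1 : ∀ j ∈ u, (Nf (pt C i j) (pt C i' j) (k j) : ℚ)
        = if (∀ ℓ : Fin m, ℓ.1 < k j → rowAt m (C j) ℓ.1 ⬝ᵥ (bvec m i + bvec m i') = 0)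
            then (-1:ℚ) ^ ((rowAt m (C j) (k j) ⬝ᵥ (bvec m i + bvec m i')).val) else 0 :=
      fun j hj => N_term C i i' j (k j) (by have := hk j hj; omega)
    rw [Finset.prod_congr rfl h1,
      prod_formula u _ (fun j => rowAt m (C j) (k j) ⬝ᵥ (bvec m i + bvec m i'))]
    have hsum : (∑ j ∈ u, rowAt m (C j) (k j) ⬝ᵥ (bvec m i + bvec m i'))
        = (∑ j ∈ u, rowAt m (C j) (k j)) ⬝ᵥ (bvec m i + bvec m i') := by
      simp only [dotProduct, Finset.sum_apply, Finset.sum_mul]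
      exact Finset.sum_comm
    rw [hsum, hT]
  have hinner : ∀ i : ℕ,
      (∑ i' ∈ Finset.range (2 ^ m), ∏ j ∈ u, (Nf (pt C i j) (pt C i' j) (k j) : ℚ))
        = ∑ e : Fin m → ZMod 2, T e := by
    intro i
    rw [Finset.sum_congr rfl fun i' _ => hterm i i']
    rw [sum_bvec m (fun e' => T (bvec m i + e'))]
    exact Equiv.sum_comp (Equiv.addLeft (bvec m i)) T
  rw [Gam, Finset.sum_congr rfl fun i _ => hinner i, Finset.sum_const, Finset.card_range]
  rw [nsmul_eq_mul]
  push_cast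
  rw [← mul_assoc, inv_mul_cancel₀ (by positivity), one_mul]

lemma rank_submatrix_rows_le {α β n : Type*} [Fintype n] [Fintype α] [Fintype β]
    [DecidableEq n] (A : Matrix α n (ZMod 2)) (f : β → α) :
    (A.submatrix f _root_.id).rank ≤ A.rank := by
  have h : A.submatrix f _root_.id = A.submatrix f ⇑(Equiv.refl n) := rfl
  rw [h, Matrix.rank, Matrix.rank, Matrix.mulVecLin_submatrix]
  have h2 : LinearMap.funLeft (ZMod 2) (ZMod 2) ⇑(Equiv.refl n).symm = LinearMap.id := rfl
  rw [h2, LinearMap.comp_id, LinearMap.range_comp]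
  exact Submodule.finrank_map_le _ _

lemma rank_stack_mono {m s : ℕ} (C : Fin s → Matrix (Fin m) (Fin m) (ZMod 2))
    (u : Finset (Fin s)) (k k' : Fin s → ℕ) (hle : ∀ j, k' j ≤ k j) :
    (stack C u k').rank ≤ (stack C u k).rank := by
  have hsub : stack C u k' = (stack C u k).submatrix
      (fun p : ((j : {x // x ∈ u}) × Fin (k' j.1)) =>
        (⟨p.1, ⟨p.2.1, lt_of_lt_of_le p.2.2 (hle p.1.1)⟩⟩ : (j : {x // x ∈ u}) × Fin (k j.1)))
      _root_.id := rfl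
  rw [hsub]
  exact rank_submatrix_rows_le _ _

lemma rank_add_ker {m : ℕ} {rows : Type*} [Fintype rows] (A : Matrix rows (Fin m) (ZMod 2)) :
    A.rank + Module.finrank (ZMod 2) (LinearMap.ker A.mulVecLin) = m := by
  have h := LinearMap.finrank_range_add_finrank_ker A.mulVecLin
  rwa [Module.finrank_fintype_fun_eq_card, Fintype.card_fin] at h

lemma rank_le_m {m : ℕ} {rows : Type*} [Fintype rows] (A : Matrix rows (Fin m) (ZMod 2)) :
    A.rank ≤ m := by
  have := Matrix.rank_le_card_width A
  simpa using this

lemma reduce_sum {s : ℕ} (u : Finset (Fin s)) :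
    ∀ (n : ℕ) (k : Fin s → ℕ), (∑ j ∈ u, k j) = n → ∀ T ≤ n,
      ∃ k'' : Fin s → ℕ, (∀ j, k'' j ≤ k j) ∧ (∑ j ∈ u, k'' j) = T := by
  intro n
  induction n with
  | zero =>
    intro k hk T hT
    exact ⟨fun _ => 0, fun j => Nat.zero_le _, by simpa using (by omega : T = 0) ▸ rfl⟩
  | succ n ih =>
    intro k hk T hT
    rcases Nat.lt_succ_iff_lt_or_eq.mp (Nat.lt_succ_of_le hT) with h | h
    · have hTn : T ≤ n := by omega
      have hpos : ∃ j₀ ∈ u, 0 < k j₀ := by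
        by_contra hcon
        push_neg at hcon
        have : (∑ j ∈ u, k j) = 0 := Finset.sum_eq_zero fun j hj => by
          have := hcon j hj; omega
        omega
      obtain ⟨j₀, hj₀, hkj₀⟩ := hpos
      set k1 := Function.update k j₀ (k j₀ - 1) with hk1
      have hsum1 : (∑ j ∈ u, k1 j) = n := by
        rw [Finset.sum_update_of_mem hj₀]
        rw [← Finset.sum_sdiff (Finset.singleton_subset_iff.mpr hj₀)] at hk
        simp only [Finset.sum_singleton] at hk
        omega
      obtain ⟨k'', hle, hs⟩ := ih k1 hsum1 T hTn
      refine ⟨k'', fun j => ?_, hs⟩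
      by_cases hj : j = j₀
      · subst hj
        have := hle j
        rw [hk1, Function.update_self] at this
        omega
      · have := hle j
        rwa [hk1, Function.update_of_ne hj] at this
    · exact ⟨k, fun j => le_refl _, by omega⟩

lemma exists_bad {m s : ℕ} (C : Fin s → Matrix (Fin m) (Fin m) (ZMod 2))
    (u : Finset (Fin s)) (hu : u.Nonempty) (k : Fin s → ℕ) (hk : ∀ j ∈ u, k j ≤ m - 1)
    (hm : 1 ≤ m)
    (hrkA : (stack C u k).rank = ∑ j ∈ u, k j)
    (hrkAp : (stack C u (fun j => if j ∈ u then k j + 1 else k j)).rank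
      = (∑ j ∈ u, k j) + u.card) :
    ∃ e : Fin m → ZMod 2, (stack C u k).mulVec e = 0 ∧
      (∑ j ∈ u, rowAt m (C j) (k j)) ⬝ᵥ e = 1 := by
  classical
  set kp : Fin s → ℕ := fun j => if j ∈ u then k j + 1 else k j with hkp
  set A := stack C u k with hA
  set Ap := stack C u kp with hAp
  set G := grad C u k with hG
  set V := LinearMap.ker A.mulVecLin with hV
  set ψ : V →ₗ[ZMod 2] ({x // x ∈ u} → ZMod 2) := G.mulVecLin ∘ₗ V.subtype with hψ
  -- kernel of ψ embeds into kernel of Ap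
  have hmem : ∀ x : LinearMap.ker ψ, (x.1.1 : Fin m → ZMod 2) ∈ LinearMap.ker Ap.mulVecLin := by
    intro x
    rw [LinearMap.mem_ker, Matrix.mulVecLin_apply]
    funext p
    obtain ⟨⟨j, hj⟩, r⟩ := p
    have hrkp : r.1 < kp j := r.2
    have hkpj : kp j = k j + 1 := if_pos hj
    have hApp : Ap.mulVec x.1.1 ⟨⟨j, hj⟩, r⟩ = rowAt m (C j) r.1 ⬝ᵥ x.1.1 := rfl
    rw [hApp]
    by_cases hcase : r.1 < k j
    · have hx : A.mulVec x.1.1 = 0 := x.1.2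
      have := congrFun hx ⟨⟨j, hj⟩, ⟨r.1, hcase⟩⟩
      exact this
    · have hreq : r.1 = k j := by omega
      have hx : ψ x.1 = 0 := x.2
      have hGr0 : rowAt m (C j) (k j) ⬝ᵥ x.1.1 = 0 := congrFun hx ⟨j, hj⟩
      have h0 : rowAt m (C j) r.1 = rowAt m (C j) (k j) := by rw [hreq]
      rw [h0]
      exact hGr0
  set θ : LinearMap.ker ψ →ₗ[ZMod 2] LinearMap.ker Ap.mulVecLin :=
    LinearMap.codRestrict _ (V.subtype ∘ₗ (LinearMap.ker ψ).subtype) hmem with hθ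
  have hθinj : Function.Injective θ := by
    intro a b hab
    have h1 := congrArg (fun z : ↥(LinearMap.ker Ap.mulVecLin) => (z : Fin m → ZMod 2)) hab
    exact Subtype.ext (Subtype.ext h1)
  have hker_le : Module.finrank (ZMod 2) (LinearMap.ker ψ)
      ≤ Module.finrank (ZMod 2) (LinearMap.ker Ap.mulVecLin) :=
    LinearMap.finrank_le_finrank_of_injective hθinj
  have hrn : Module.finrank (ZMod 2) (LinearMap.range ψ)
      + Module.finrank (ZMod 2) (LinearMap.ker ψ) = Module.finrank (ZMod 2) V :=
    LinearMap.finrank_range_add_finrank_ker ψ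
  have hVdim : (∑ j ∈ u, k j) + Module.finrank (ZMod 2) V = m := by
    have := rank_add_ker A
    rwa [hrkA] at this
  have hApdim : ((∑ j ∈ u, k j) + u.card)
      + Module.finrank (ZMod 2) (LinearMap.ker Ap.mulVecLin) = m := by
    have := rank_add_ker Ap
    rwa [hrkAp] at this
  have hcard : Module.finrank (ZMod 2) ({x // x ∈ u} → ZMod 2) = u.card := by
    rw [Module.finrank_fintype_fun_eq_card, Fintype.card_coe]
  have hrange_le : Module.finrank (ZMod 2) (LinearMap.range ψ) ≤ u.card := by
    have := Submodule.finrank_le (LinearMap.range ψ)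
    rwa [hcard] at this
  have hrange_eq : Module.finrank (ZMod 2) (LinearMap.range ψ) = u.card := by omega
  have htop : LinearMap.range ψ = ⊤ := by
    apply Submodule.eq_top_of_finrank_eq
    rw [hrange_eq, hcard]
  have hsurj : Function.Surjective ψ := LinearMap.range_eq_top.mp htop
  obtain ⟨j₀, hj₀⟩ := hu
  obtain ⟨x, hx⟩ := hsurj (Pi.single (⟨j₀, hj₀⟩ : {x // x ∈ u}) 1)
  refine ⟨x.1, x.2, ?_⟩
  have hdot : (∑ j ∈ u, rowAt m (C j) (k j)) ⬝ᵥ x.1 = ∑ j ∈ u, rowAt m (C j) (k j) ⬝ᵥ x.1 := by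
    simp only [dotProduct, Finset.sum_apply, Finset.sum_mul]
    exact Finset.sum_comm
  rw [hdot]
  have hcoe : (∑ j ∈ u, rowAt m (C j) (k j) ⬝ᵥ x.1)
      = ∑ j' : {x // x ∈ u}, rowAt m (C j'.1) (k j'.1) ⬝ᵥ x.1 :=
    (Finset.sum_coe_sort u fun j => rowAt m (C j) (k j) ⬝ᵥ x.1).symm
  rw [hcoe]
  have hterm : ∀ j' : {x // x ∈ u}, rowAt m (C j'.1) (k j'.1) ⬝ᵥ x.1
      = (Pi.single (⟨j₀, hj₀⟩ : {x // x ∈ u}) (1 : ZMod 2) : {x // x ∈ u} → ZMod 2) j' := by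
    intro j'
    have h2 : ψ x j'
        = (Pi.single (⟨j₀, hj₀⟩ : {x // x ∈ u}) (1 : ZMod 2) : {x // x ∈ u} → ZMod 2) j' := by
      rw [hx]
    exact h2
  rw [Finset.sum_congr rfl fun j' _ => hterm j']
  rw [Finset.sum_eq_single (⟨j₀, hj₀⟩ : {x // x ∈ u})]
  · rw [Pi.single_eq_same]
  · intro b _ hb
    exact Pi.single_eq_of_ne hb 1
  · intro h
    exact absurd (Finset.mem_univ _) h

lemma zmod2_pow_flip (x : ZMod 2) : ((-1:ℚ)) ^ ((1 + x).val) = -((-1:ℚ)) ^ x.val := by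
  have h : x = 0 ∨ x = 1 := by revert x; decide
  rcases h with h | h <;> subst h <;> norm_num
  · rw [show ZMod.val (1 : ZMod 2) = 1 from rfl]; norm_num
  · rw [show ZMod.val (2 : ZMod 2) = 0 from rfl, show ZMod.val (1 : ZMod 2) = 1 from rfl]
    norm_num

lemma zmod2_ne_one (a : ZMod 2) (h : ¬ a = 1) : a = 0 := by revert a; decide

lemma char_sum_zero {m : ℕ} (T : (Fin m → ZMod 2) → ℚ) (e₀ : Fin m → ZMod 2)
    (hflip : ∀ e, T (e₀ + e) = - T e) : (∑ e : Fin m → ZMod 2, T e) = 0 := by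
  have h := Equiv.sum_comp (Equiv.addLeft e₀) T
  have h2 : (∑ e : Fin m → ZMod 2, T (e₀ + e)) = ∑ e : Fin m → ZMod 2, T e := h
  rw [Finset.sum_congr rfl fun e _ => hflip e, Finset.sum_neg_distrib] at h2
  linarith

lemma sum_indicator_card {m : ℕ} {rows : Type*} [Fintype rows]
    (A : Matrix rows (Fin m) (ZMod 2)) :
    (∑ e : Fin m → ZMod 2, if A.mulVec e = 0 then (1:ℚ) else 0)
      = (2:ℚ) ^ (Module.finrank (ZMod 2) (LinearMap.ker A.mulVecLin)) := by
  classical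
  rw [Finset.sum_boole]
  have h1 : (Finset.filter (fun e : Fin m → ZMod 2 => A.mulVec e = 0) Finset.univ).card
      = Fintype.card {e : Fin m → ZMod 2 // A.mulVec e = 0} := (Fintype.card_subtype _).symm
  have h2 : Fintype.card {e : Fin m → ZMod 2 // A.mulVec e = 0}
      = Fintype.card ↥(LinearMap.ker A.mulVecLin) :=
    Fintype.card_congr (Equiv.subtypeEquivRight (fun e => by
      simp [LinearMap.mem_ker, Matrix.mulVecLin_apply]))
  have h3 := Module.card_eq_pow_finrank (K := ZMod 2) (V := ↥(LinearMap.ker A.mulVecLin))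
  rw [ZMod.card] at h3
  rw [h1, h2, h3]
  push_cast
  ring


theorem statement (m s : ℕ) (hm : 1 ≤ m) (hs : 1 ≤ s)
    (C : Fin s → Matrix (Fin m) (Fin m) (ZMod 2))
    (t : ℕ) (htm : t ≤ m)
    (hnet : ∀ u' : Finset (Fin s), u'.Nonempty → ∀ k' : Fin s → ℕ,
      (∀ j ∈ u', k' j ≤ m) → (∑ j ∈ u', k' j) ≤ m - t →
      (stack C u' k').rank = ∑ j ∈ u', k' j) :
    ∀ u : Finset (Fin s), u.Nonempty → ∀ k : Fin s → ℕ, (∀ j ∈ u, k j ≤ m - 1) →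
      Gam C u k ≤ (2 : ℚ) ^ (t + s - 1) := by
  intro u hu k hk
  classical
  rw [Gam_eq hm C u k hk]
  have hQiff : ∀ e : Fin m → ZMod 2,
      (∀ j ∈ u, ∀ ℓ : Fin m, ℓ.1 < k j → rowAt m (C j) ℓ.1 ⬝ᵥ e = 0)
        ↔ (stack C u k).mulVec e = 0 := by
    intro e
    constructor
    · intro h
      funext p
      obtain ⟨⟨j, hj⟩, r⟩ := p
      have hr : r.1 < k j := r.2
      have hrm : r.1 < m := by have := hk j hj; omega
      exact h j hj ⟨r.1, hrm⟩ hr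
    · intro h j hj ℓ hℓ
      exact congrFun h ⟨⟨j, hj⟩, ⟨ℓ.1, hℓ⟩⟩
  by_cases hex : ∃ e₀ : Fin m → ZMod 2, (stack C u k).mulVec e₀ = 0 ∧
      (∑ j ∈ u, rowAt m (C j) (k j)) ⬝ᵥ e₀ = 1
  · obtain ⟨e₀, he₀, hd⟩ := hex
    have hzero : (∑ e : Fin m → ZMod 2,
        (if (∀ j ∈ u, ∀ ℓ : Fin m, ℓ.1 < k j → rowAt m (C j) ℓ.1 ⬝ᵥ e = 0)
          then (-1:ℚ) ^ (((∑ j ∈ u, rowAt m (C j) (k j)) ⬝ᵥ e).val) else 0)) = 0 := by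
      apply char_sum_zero _ e₀
      intro e
      have hmv : (stack C u k).mulVec (e₀ + e) = (stack C u k).mulVec e := by
        rw [Matrix.mulVec_add, he₀, zero_add]
      by_cases hQ : ∀ j ∈ u, ∀ ℓ : Fin m, ℓ.1 < k j → rowAt m (C j) ℓ.1 ⬝ᵥ e = 0
      · have hQ' : ∀ j ∈ u, ∀ ℓ : Fin m, ℓ.1 < k j → rowAt m (C j) ℓ.1 ⬝ᵥ (e₀ + e) = 0 := by
          rw [hQiff, hmv, ← hQiff]
          exact hQ
        rw [if_pos hQ, if_pos hQ']
        rw [show (∑ j ∈ u, rowAt m (C j) (k j)) ⬝ᵥ (e₀ + e)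
            = (∑ j ∈ u, rowAt m (C j) (k j)) ⬝ᵥ e₀ + (∑ j ∈ u, rowAt m (C j) (k j)) ⬝ᵥ e
          from dotProduct_add _ _ _, hd]
        exact zmod2_pow_flip _
      · have hQ' : ¬ ∀ j ∈ u, ∀ ℓ : Fin m, ℓ.1 < k j → rowAt m (C j) ℓ.1 ⬝ᵥ (e₀ + e) = 0 := by
          rw [hQiff, hmv, ← hQiff]
          exact hQ
        rw [if_neg hQ, if_neg hQ']
        norm_num
    rw [hzero]
    positivity
  · push_neg at hex
    have hQ1 : ∀ e : Fin m → ZMod 2, (stack C u k).mulVec e = 0 →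
        (∑ j ∈ u, rowAt m (C j) (k j)) ⬝ᵥ e = 0 := fun e h => zmod2_ne_one _ (hex e h)
    have hsum : (∑ e : Fin m → ZMod 2,
        (if (∀ j ∈ u, ∀ ℓ : Fin m, ℓ.1 < k j → rowAt m (C j) ℓ.1 ⬝ᵥ e = 0)
          then (-1:ℚ) ^ (((∑ j ∈ u, rowAt m (C j) (k j)) ⬝ᵥ e).val) else 0))
        = ∑ e : Fin m → ZMod 2, (if (stack C u k).mulVec e = 0 then (1:ℚ) else 0) := by
      refine Finset.sum_congr rfl fun e _ => ?_
      by_cases hQ : (stack C u k).mulVec e = 0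
      · rw [if_pos ((hQiff e).mpr hQ), if_pos hQ, hQ1 e hQ]
        norm_num
      · rw [if_neg (fun hcon => hQ ((hQiff e).mp hcon)), if_neg hQ]
    rw [hsum, sum_indicator_card (stack C u k)]
    have hfr : Module.finrank (ZMod 2) (LinearMap.ker (stack C u k).mulVecLin)
        ≤ t + s - 1 := by
      have hAk := rank_add_ker (stack C u k)
      have hcard_u : u.card ≤ s := by
        have := Finset.card_le_univ u
        simpa using this
      have hu1 : 1 ≤ u.card := Finset.Nonempty.card_pos hu
      have hkm : ∀ j ∈ u, k j ≤ m := fun j hj => by have := hk j hj; omega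
      by_cases hKle : (∑ j ∈ u, k j) ≤ m - t
      · have hrkA : (stack C u k).rank = ∑ j ∈ u, k j := hnet u hu k hkm hKle
        by_cases hKu : (∑ j ∈ u, k j) + u.card ≤ m - t
        · exfalso
          have hsump : (∑ j ∈ u, (fun j => if j ∈ u then k j + 1 else k j) j)
              = (∑ j ∈ u, k j) + u.card := by
            rw [Finset.sum_congr rfl fun j hj =>
              (if_pos hj : (if j ∈ u then k j + 1 else k j) = k j + 1)]
            rw [Finset.sum_add_distrib, Finset.sum_const, smul_eq_mul, mul_one]
          have hrkAp : (stack C u (fun j => if j ∈ u then k j + 1 else k j)).rank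
              = (∑ j ∈ u, k j) + u.card := by
            have hb : ∀ j ∈ u, (if j ∈ u then k j + 1 else k j) ≤ m := by
              intro j hj
              rw [if_pos hj]
              have := hk j hj
              omega
            have := hnet u hu _ hb (le_of_eq_of_le hsump hKu)
            rw [hsump] at this
            exact this
          obtain ⟨e₀, h1, h2⟩ := exists_bad C u hu k hk hm hrkA hrkAp
          exact hex e₀ h1 h2
        · omega
      · obtain ⟨k'', hle, hs''⟩ := reduce_sum u (∑ j ∈ u, k j) k rfl (m - t) (by omega)
        have hrk'' : (stack C u k'').rank = m - t := by
          have := hnet u hu k'' (fun j hj => le_trans (hle j) (hkm j hj)) (le_of_eq hs'')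
          rw [hs''] at this
          exact this
        have hmono := rank_stack_mono C u k k'' hle
        omega
    calc (2:ℚ) ^ (Module.finrank (ZMod 2) (LinearMap.ker (stack C u k).mulVecLin))
        ≤ (2:ℚ) ^ (t + s - 1) := by
          apply pow_le_pow_right₀ (by norm_num) hfr

end
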